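/- In the FD C-NOMA scheme, at the optimum the power allocation coefficient satisfies α* = f(P_d*) where f(x) = δ(γSI·x + γm·P + 1)/(γm·P·(δ+1)); i.e., the strong user's SIC-rate constraint R_{m,n}^F ≥ R_th is tight at any sum-rate maximizer with α* given by A_F evaluated at the optimal relaying power, provided A_F(P_d*) ≥ B_F(P_d*). -/

import Mathlib

private lemma auxB_eq (P γm γSI a t : ℝ) (hM : 0 < P * γm) (hc : 0 < t * γSI + 1)
    (ha1 : a < 1) :
    Real.logb 2 (1 + (1 - a) * P * γm / (t * γSI + 1)) +
      Real.logb 2 (1 + a * P * γm / ((1 - a) * P * γm + t * γSI + 1)) =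
    Real.logb 2 (1 + P * γm / (t * γSI + 1)) := by
  have hden : 0 < (1 - a) * P * γm + t * γSI + 1 := by
    nlinarith [mul_pos (sub_pos.mpr ha1) hM]
  have e1 : 1 + (1 - a) * P * γm / (t * γSI + 1)
      = ((1 - a) * P * γm + (t * γSI + 1)) / (t * γSI + 1) := by
    field_simp; ring
  have e2 : 1 + a * P * γm / ((1 - a) * P * γm + t * γSI + 1)
      = (P * γm + (t * γSI + 1)) / ((1 - a) * P * γm + t * γSI + 1) := by
    rw [eq_div_iff hden.ne', add_mul, div_mul_cancel₀ _ hden.ne']; ring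
  have e3 : 1 + P * γm / (t * γSI + 1)
      = (P * γm + (t * γSI + 1)) / (t * γSI + 1) := by
    field_simp; ring
  have hA : 0 < (1 - a) * P * γm + (t * γSI + 1) := by linarith
  have hB : 0 < P * γm + (t * γSI + 1) := by linarith
  rw [e1, e2, e3, Real.logb_div hA.ne' hc.ne', Real.logb_div hB.ne' hden.ne',
    Real.logb_div hB.ne' hc.ne']
  have : (1 - a) * P * γm + (t * γSI + 1) = (1 - a) * P * γm + t * γSI + 1 := by ring
  rw [this]; ring

private lemma auxA (P γm γn γd γSI Rth δ t a : ℝ) (hM : 0 < P * γm) (hδpos : 0 < δ)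
    (hδR : (2 : ℝ) ^ Rth = δ + 1) (hc : 0 < t * γSI + 1) (ha1 : a < 1)
    (ha : a = δ * (γSI * t + γm * P + 1) / (γm * P * (δ + 1)))
    (hT3 : δ ≤ t * γd + a * P * γn / ((1 - a) * P * γn + 1)) :
    Real.logb 2 (1 + (1 - a) * P * γm / (t * γSI + 1)) +
      min (Real.logb 2 (1 + a * P * γm / ((1 - a) * P * γm + t * γSI + 1)))
          (Real.logb 2 (1 + t * γd + a * P * γn / ((1 - a) * P * γn + 1)))
    = Real.logb 2 (1 + P * γm / (t * γSI + 1)) := by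
  have hδ1 : (0:ℝ) < δ + 1 := by linarith
  have hMP : 0 < γm * P * (δ + 1) := by nlinarith [mul_pos hM hδ1]
  have key1 : a * (γm * P * (δ + 1)) = δ * (γSI * t + γm * P + 1) := by
    rw [ha, div_mul_cancel₀ _ hMP.ne']
  have hd : ((1 - a) * P * γm + t * γSI + 1) * (δ + 1) = P * γm + (t * γSI + 1) := by
    linear_combination -key1
  have hden : 0 < (1 - a) * P * γm + t * γSI + 1 := by nlinarith [hd]
  have h6 : (a * (P * γm)) * (δ + 1) = (δ * ((1 - a) * P * γm + t * γSI + 1)) * (δ + 1) := by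
    linear_combination key1 - δ * hd
  have h5 : a * (P * γm) = δ * ((1 - a) * P * γm + t * γSI + 1) :=
    mul_right_cancel₀ hδ1.ne' h6
  have e2 : 1 + a * P * γm / ((1 - a) * P * γm + t * γSI + 1) = δ + 1 := by
    rw [show a * P * γm = δ * ((1 - a) * P * γm + t * γSI + 1) by linear_combination h5,
      mul_div_assoc, div_self hden.ne', mul_one]; ring
  have hRth2 : Real.logb 2 (δ + 1) = Rth := by
    rw [← hδR, Real.logb_rpow (by norm_num) (by norm_num)]
  have hT3' : Rth ≤ Real.logb 2 (1 + t * γd + a * P * γn / ((1 - a) * P * γn + 1)) := by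
    rw [← hRth2]
    exact Real.logb_le_logb_of_le one_lt_two (by linarith) (by linarith)
  rw [e2, hRth2, min_eq_left hT3', ← auxB_eq P γm γSI a t hM hc ha1, e2, hRth2]

/-- In FD C-NOMA, at any sum-rate maximizer `(α*, Pd*)` over the feasible region,
provided `A_F(Pd*) ≥ B_F(Pd*)`, the strong user's SIC-rate constraint is tight:
`α* = f(Pd*)` where `f(x) = δ·(γSI·x + γm·P + 1)/(γm·P·(δ+1))`. -/
theorem fd_optimal_alpha_tight (P γm γn γd γSI Pbar Rth δ : ℝ)
    (hP : 0 < P) (hγn : 0 < γn) (hmn : γn < γm) (hγd : 0 < γd) (hγSI : 0 < γSI)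
    (hPbar : 0 ≤ Pbar) (hR : 0 < Rth) (hδ : δ = 2 ^ Rth - 1) :
    let AF : ℝ → ℝ := fun Pd => δ * (γSI * Pd + γm * P + 1) / (γm * P * (δ + 1))
    let BF : ℝ → ℝ := fun Pd =>
      (P * γn + 1) * (δ - Pd * γd) / (P * γn * (δ + 1 - Pd * γd))
    let CF : ℝ → ℝ := fun Pd => 1 - δ * (γSI * Pd + 1) / (P * γm)
    -- FD sum rate of the pair
    let g : ℝ → ℝ → ℝ := fun α Pd =>
      Real.logb 2 (1 + (1 - α) * P * γm / (Pd * γSI + 1)) +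
        min (Real.logb 2 (1 + α * P * γm / ((1 - α) * P * γm + Pd * γSI + 1)))
            (Real.logb 2 (1 + Pd * γd + α * P * γn / ((1 - α) * P * γn + 1)))
    -- feasible region
    let S : Set (ℝ × ℝ) := {p : ℝ × ℝ |
      0 ≤ p.2 ∧ p.2 ≤ Pbar ∧ max (AF p.2) (BF p.2) ≤ p.1 ∧ p.1 ≤ CF p.2}
    S.Nonempty →
      ∀ star ∈ S, (∀ p ∈ S, g p.1 p.2 ≤ g star.1 star.2) →
        BF star.2 ≤ AF star.2 →
          star.1 = δ * (γSI * star.2 + γm * P + 1) / (γm * P * (δ + 1)) := by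
  intro AF BF CF g S _hne star hstar hmax hBA
  have hAFd : ∀ t, AF t = δ * (γSI * t + γm * P + 1) / (γm * P * (δ + 1)) := fun _ => rfl
  have hBFd : ∀ t, BF t = (P * γn + 1) * (δ - t * γd) / (P * γn * (δ + 1 - t * γd)) :=
    fun _ => rfl
  have hCFd : ∀ t, CF t = 1 - δ * (γSI * t + 1) / (P * γm) := fun _ => rfl
  have hgd : ∀ a t, g a t = Real.logb 2 (1 + (1 - a) * P * γm / (t * γSI + 1)) +
      min (Real.logb 2 (1 + a * P * γm / ((1 - a) * P * γm + t * γSI + 1)))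
          (Real.logb 2 (1 + t * γd + a * P * γn / ((1 - a) * P * γn + 1))) := fun _ _ => rfl
  have hSd : ∀ p : ℝ × ℝ, p ∈ S ↔
      (0 ≤ p.2 ∧ p.2 ≤ Pbar ∧ max (AF p.2) (BF p.2) ≤ p.1 ∧ p.1 ≤ CF p.2) := fun _ => Iff.rfl
  clear_value AF BF CF g S
  obtain ⟨α, Pd⟩ := star
  obtain ⟨hPd0, hPdb, hmx, hCFle⟩ := (hSd _).mp hstar
  simp only at hPd0 hPdb hmx hCFle
  replace hBA : BF Pd ≤ AF Pd := hBA
  clear hstar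
  have hγm : 0 < γm := hγn.trans hmn
  have hδpos : 0 < δ := by
    have h1 : (1:ℝ) < 2 ^ Rth := Real.one_lt_rpow one_lt_two hR
    rw [hδ]; linarith only [h1]
  have hδR : (2:ℝ) ^ Rth = δ + 1 := by rw [hδ]; ring
  have hM : 0 < P * γm := mul_pos hP hγm
  have hN : 0 < P * γn := mul_pos hP hγn
  have hMN : P * γn < P * γm := mul_lt_mul_of_pos_left hmn hP
  have hc : 0 < Pd * γSI + 1 := by linarith only [mul_nonneg hPd0 hγSI.le]
  have hAFle : AF Pd ≤ α := le_trans (le_max_left _ _) hmx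
  have hCFdef : CF Pd = 1 - δ * (γSI * Pd + 1) / (P * γm) := hCFd Pd
  have hγSIPd : 0 ≤ γSI * Pd := mul_nonneg hγSI.le hPd0
  have hCF1 : CF Pd < 1 := by
    have h1 : 0 < δ * (γSI * Pd + 1) / (P * γm) :=
      div_pos (mul_pos hδpos (by linarith only [hγSIPd])) hM
    rw [hCFdef]; linarith only [h1]
  have hα1 : α < 1 := lt_of_le_of_lt hCFle hCF1
  have hAFdef : AF Pd = δ * (γSI * Pd + γm * P + 1) / (γm * P * (δ + 1)) := hAFd Pd
  have hMP : 0 < γm * P * (δ + 1) := mul_pos (mul_pos hγm hP) (by linarith only [hδpos])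
  have ha0pos : 0 < AF Pd := by
    rw [hAFdef]
    exact div_pos (mul_pos hδpos (by linarith only [hγSIPd, mul_pos hγm hP])) hMP
  rcases eq_or_lt_of_le hAFle with heq | hlt
  · show α = δ * (γSI * Pd + γm * P + 1) / (γm * P * (δ + 1))
    rw [← hAFdef]; exact heq.symm
  exfalso
  have ha0lt1 : AF Pd < 1 := lt_trans hlt hα1
  have hD20 : 0 < (1 - AF Pd) * P * γn + 1 := by
    linarith only [mul_pos (mul_pos (sub_pos.mpr ha0lt1) hP) hγn]
  have hD2α : 0 < (1 - α) * P * γn + 1 := by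
    linarith only [mul_pos (mul_pos (sub_pos.mpr hα1) hP) hγn]
  have hD1α : 0 < (1 - α) * P * γm + Pd * γSI + 1 := by
    linarith only [mul_pos (mul_pos (sub_pos.mpr hα1) hP) hγm, mul_nonneg hPd0 hγSI.le]
  have hD10 : 0 < (1 - AF Pd) * P * γm + Pd * γSI + 1 := by
    linarith only [mul_pos (mul_pos (sub_pos.mpr ha0lt1) hP) hγm, mul_nonneg hPd0 hγSI.le]
  have key1 : AF Pd * (γm * P * (δ + 1)) = δ * (γSI * Pd + γm * P + 1) := by
    rw [hAFdef, div_mul_cancel₀ _ hMP.ne']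
  have hδeq : δ * ((1 - AF Pd) * P * γm + Pd * γSI + 1) = AF Pd * (P * γm) := by
    linear_combination -key1
  have hδeq2 : δ * ((1 - AF Pd) * P * γm + Pd * γSI + 1) * ((1 - AF Pd) * P * γn + 1)
      = AF Pd * (P * γm) * ((1 - AF Pd) * P * γn + 1) := by rw [hδeq]
  -- step 1 : w ≥ 0 and the T3-slack at (AF Pd, Pd)
  have hBFdef : BF Pd = (P * γn + 1) * (δ - Pd * γd) / (P * γn * (δ + 1 - Pd * γd)) := hBFd Pd
  have hBFle : BF Pd ≤ α := le_trans (le_max_right _ _) hmx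
  have hw : 0 ≤ δ + 1 - Pd * γd := by
    by_contra hneg
    push_neg at hneg
    have hdneg : P * γn * (δ + 1 - Pd * γd) < 0 := mul_neg_of_pos_of_neg hN hneg
    have h1 : 1 < BF Pd := by
      rw [hBFdef, lt_div_iff_of_neg hdneg]
      linarith only [hneg, hN]
    linarith only [h1, hBFle, hα1]
  have hT3q : δ ≤ Pd * γd + AF Pd * P * γn / ((1 - AF Pd) * P * γn + 1) := by
    rcases eq_or_lt_of_le hw with hw0 | hwpos
    · have hx : 0 ≤ AF Pd * P * γn / ((1 - AF Pd) * P * γn + 1) :=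
        div_nonneg (mul_nonneg (mul_nonneg ha0pos.le hP.le) hγn.le) hD20.le
      linarith only [hx, hw0]
    · have hdpos : 0 < P * γn * (δ + 1 - Pd * γd) := mul_pos hN hwpos
      rw [hBFdef, div_le_iff₀ hdpos] at hBA
      have h2 : δ - Pd * γd ≤ AF Pd * P * γn / ((1 - AF Pd) * P * γn + 1) := by
        rw [le_div_iff₀ hD20]; linarith only [hBA]
      linarith only [h2]
  -- value of g at (AF Pd, Pd) and the upper bound for g at (α, Pd)
  have hqS : ((AF Pd, Pd) : ℝ × ℝ) ∈ S :=
    (hSd _).mpr ⟨hPd0, hPdb, max_le le_rfl hBA, le_trans hlt.le hCFle⟩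
  have hgq : g (AF Pd) Pd = Real.logb 2 (1 + P * γm / (Pd * γSI + 1)) := by
    rw [hgd]; exact auxA P γm γn γd γSI Rth δ Pd (AF Pd) hM hδpos hδR hc ha0lt1 hAFdef hT3q
  have hgstar : g α Pd = Real.logb 2 (1 + (1 - α) * P * γm / (Pd * γSI + 1)) +
      min (Real.logb 2 (1 + α * P * γm / ((1 - α) * P * γm + Pd * γSI + 1)))
          (Real.logb 2 (1 + Pd * γd + α * P * γn / ((1 - α) * P * γn + 1))) := hgd α Pd
  have hBid := auxB_eq P γm γSI α Pd hM hc hα1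
  have hKb : g α Pd ≤ Real.logb 2 (1 + P * γm / (Pd * γSI + 1)) := by
    rw [hgstar]
    have h1 := min_le_left (Real.logb 2 (1 + α * P * γm / ((1 - α) * P * γm + Pd * γSI + 1)))
      (Real.logb 2 (1 + Pd * γd + α * P * γn / ((1 - α) * P * γn + 1)))
    linarith only [h1, hBid]
  have hKle : Real.logb 2 (1 + P * γm / (Pd * γSI + 1)) ≤ g α Pd := by
    have h' : g (AF Pd) Pd ≤ g α Pd := hmax (AF Pd, Pd) hqS
    linarith only [h', hgq]
  -- extract T2 ≤ T3 at star
  have hXY : Real.logb 2 (1 + α * P * γm / ((1 - α) * P * γm + Pd * γSI + 1))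
      ≤ Real.logb 2 (1 + Pd * γd + α * P * γn / ((1 - α) * P * γn + 1)) := by
    rcases le_total (Real.logb 2 (1 + α * P * γm / ((1 - α) * P * γm + Pd * γSI + 1)))
      (Real.logb 2 (1 + Pd * γd + α * P * γn / ((1 - α) * P * γn + 1))) with h | h
    · exact h
    · have hmin := min_eq_right h
      rw [hgstar, hmin] at hKle
      linarith only [hKle, hBid, hKb, hgstar.symm.le]
  have hαpos : 0 < α := lt_trans ha0pos hlt
  have hpos1 : 0 < 1 + α * P * γm / ((1 - α) * P * γm + Pd * γSI + 1) := by
    have h1 : 0 ≤ α * P * γm / ((1 - α) * P * γm + Pd * γSI + 1) :=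
      div_nonneg (mul_nonneg (mul_nonneg hαpos.le hP.le) hγm.le) hD1α.le
    linarith only [h1]
  have hpos2 : 0 < 1 + Pd * γd + α * P * γn / ((1 - α) * P * γn + 1) := by
    have h1 : 0 ≤ α * P * γn / ((1 - α) * P * γn + 1) :=
      div_nonneg (mul_nonneg (mul_nonneg hαpos.le hP.le) hγn.le) hD2α.le
    linarith only [h1, mul_nonneg hPd0 hγd.le]
  have h7 : 1 + α * P * γm / ((1 - α) * P * γm + Pd * γSI + 1)
      ≤ 1 + Pd * γd + α * P * γn / ((1 - α) * P * γn + 1) :=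
    (Real.logb_le_logb one_lt_two hpos1 hpos2).mp hXY
  -- polynomial form of T2 ≤ T3
  have hsum : Pd * γd + α * P * γn / ((1 - α) * P * γn + 1)
      = (Pd * γd * ((1 - α) * P * γn + 1) + α * P * γn) / ((1 - α) * P * γn + 1) := by
    rw [eq_div_iff hD2α.ne', add_mul, div_mul_cancel₀ _ hD2α.ne']
  have hE1 : α * P * γm * ((1 - α) * P * γn + 1)
      ≤ (Pd * γd * ((1 - α) * P * γn + 1) + α * P * γn) * ((1 - α) * P * γm + Pd * γSI + 1) := by
    have h8 : α * P * γm / ((1 - α) * P * γm + Pd * γSI + 1)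
        ≤ (Pd * γd * ((1 - α) * P * γn + 1) + α * P * γn) / ((1 - α) * P * γn + 1) := by
      rw [← hsum]; linarith only [h7]
    exact (div_le_div_iff₀ hD1α hD2α).mp h8
  -- key strict inequality (δ - Pd γd) * D20 < a0 * N
  have hfin : (δ - Pd * γd) * ((1 - AF Pd) * P * γn + 1) < AF Pd * P * γn := by
    rcases le_or_gt (P * γm) ((Pd * γSI + 1) * (P * γn)) with hcase | hcase
    · have hPdpos : 0 < Pd := by
        by_contra hq
        push_neg at hq
        have h1 : 0 < Pd * (γSI * (P * γn)) := by linarith only [hcase, hMN]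
        have h2 : 0 ≤ (-Pd) * (γSI * (P * γn)) :=
          mul_nonneg (neg_nonneg.mpr hq) (mul_nonneg hγSI.le (mul_nonneg hP.le hγn.le))
        linarith only [h1, h2]
      have h10' : (δ * ((1 - AF Pd) * P * γn + 1)) * ((1 - AF Pd) * P * γm + Pd * γSI + 1)
          ≤ (AF Pd * (P * γn)) * ((1 - AF Pd) * P * γm + Pd * γSI + 1) := by
        linarith only [hδeq2, mul_nonneg ha0pos.le (sub_nonneg.mpr hcase)]
      have h10 : δ * ((1 - AF Pd) * P * γn + 1) ≤ AF Pd * (P * γn) :=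
        (mul_le_mul_iff_of_pos_right hD10).mp h10'
      have h11 : 0 < Pd * γd * ((1 - AF Pd) * P * γn + 1) :=
        mul_pos (mul_pos hPdpos hγd) hD20
      linarith only [h10, h11]
    · have h11 : α * (P * γm - (Pd * γSI + 1) * (P * γn))
          ≤ Pd * γd * (((1 - α) * P * γm + Pd * γSI + 1) * ((1 - α) * P * γn + 1)) := by
        linarith only [hE1]
      have h12 : AF Pd * (P * γm - (Pd * γSI + 1) * (P * γn))
          < α * (P * γm - (Pd * γSI + 1) * (P * γn)) :=
        mul_lt_mul_of_pos_right hlt (by linarith only [hcase])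
      have hd1le : (1 - α) * P * γm + Pd * γSI + 1 ≤ (1 - AF Pd) * P * γm + Pd * γSI + 1 := by
        linarith only [mul_le_mul_of_nonneg_right
          (mul_le_mul_of_nonneg_right hlt.le hP.le) hγm.le]
      have hd2le : (1 - α) * P * γn + 1 ≤ (1 - AF Pd) * P * γn + 1 := by
        linarith only [mul_le_mul_of_nonneg_right
          (mul_le_mul_of_nonneg_right hlt.le hP.le) hγn.le]
      have h13 : Pd * γd * (((1 - α) * P * γm + Pd * γSI + 1) * ((1 - α) * P * γn + 1))
          ≤ Pd * γd * (((1 - AF Pd) * P * γm + Pd * γSI + 1) * ((1 - AF Pd) * P * γn + 1)) := by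
        apply mul_le_mul_of_nonneg_left _ (mul_nonneg hPd0 hγd.le)
        exact mul_le_mul hd1le hd2le hD2α.le hD10.le
      have h14 : AF Pd * (P * γm - (Pd * γSI + 1) * (P * γn))
          < Pd * γd * (((1 - AF Pd) * P * γm + Pd * γSI + 1) * ((1 - AF Pd) * P * γn + 1)) := by
        linarith only [h11, h12, h13]
      have h16 : ((δ - Pd * γd) * ((1 - AF Pd) * P * γn + 1)) *
            ((1 - AF Pd) * P * γm + Pd * γSI + 1)
          < (AF Pd * P * γn) * ((1 - AF Pd) * P * γm + Pd * γSI + 1) := by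
        linarith only [h14, hδeq2]
      exact (mul_lt_mul_iff_of_pos_right hD10).mp h16
  -- Pd must be positive
  have hPdpos : 0 < Pd := by
    rcases eq_or_lt_of_le hPd0 with h0 | h0
    · exfalso
      have h20 := mul_lt_mul_of_pos_right hfin hD10
      have h0' : Pd = 0 := h0.symm
      subst h0'
      linarith only [h20, hδeq2, mul_pos ha0pos (sub_pos.mpr hMN)]
    · exact h0
  -- strict slack at Pd for the weak-user constraint evaluated at AF
  have hWPd : δ < Pd * γd + AF Pd * P * γn / ((1 - AF Pd) * P * γn + 1) := by
    have h := (lt_div_iff₀ hD20).mpr hfin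
    linarith only [h]
  -- continuity: find Pd' < Pd keeping the strict slack
  have hAFcont : Continuous (fun t : ℝ => δ * (γSI * t + γm * P + 1) / (γm * P * (δ + 1))) := by
    apply Continuous.div_const
    exact continuous_const.mul (((continuous_const.mul continuous_id).add
      continuous_const).add continuous_const)
  have hAFfun : AF = fun t : ℝ => δ * (γSI * t + γm * P + 1) / (γm * P * (δ + 1)) :=
    funext hAFd
  have hcontW : ContinuousAt
      (fun t : ℝ => t * γd + AF t * P * γn / ((1 - AF t) * P * γn + 1)) Pd := by
    rw [hAFfun]
    have h1 : Continuous (fun t : ℝ =>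
        (δ * (γSI * t + γm * P + 1) / (γm * P * (δ + 1))) * P * γn) :=
      (hAFcont.mul continuous_const).mul continuous_const
    have h2 : Continuous (fun t : ℝ =>
        (1 - δ * (γSI * t + γm * P + 1) / (γm * P * (δ + 1))) * P * γn + 1) :=
      (((continuous_const.sub hAFcont).mul continuous_const).mul continuous_const).add
        continuous_const
    have h3 : ((1 : ℝ) - δ * (γSI * Pd + γm * P + 1) / (γm * P * (δ + 1))) * P * γn + 1 ≠ 0 := by
      rw [← hAFdef]; exact hD20.ne'
    exact ((continuous_id.mul continuous_const).continuousAt).add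
      ((h1.continuousAt).div (h2.continuousAt) h3)
  have hev : ∀ᶠ t in nhds Pd, δ < t * γd + AF t * P * γn / ((1 - AF t) * P * γn + 1) := by
    have h := hcontW.eventually (eventually_gt_nhds (by rw [hAFfun] at hWPd ⊢; exact hWPd))
    exact h
  obtain ⟨ε, hεpos, hball⟩ := Metric.eventually_nhds_iff.mp hev
  set Pd' : ℝ := Pd - min ε Pd / 2 with hPd'def
  have hminpos : 0 < min ε Pd := lt_min hεpos hPdpos
  have hPd'lt : Pd' < Pd := by rw [hPd'def]; linarith only [hminpos]
  have hPd'pos : 0 < Pd' := by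
    have h1 := min_le_right ε Pd
    rw [hPd'def]; linarith only [h1, hPdpos]
  have hdist : dist Pd' Pd < ε := by
    rw [Real.dist_eq, hPd'def, show Pd - min ε Pd / 2 - Pd = -(min ε Pd / 2) by ring,
      abs_neg, abs_of_nonneg (by linarith only [hminpos])]
    have h1 := min_le_left ε Pd
    linarith only [h1, hεpos]
  have hWPd' : δ < Pd' * γd + AF Pd' * P * γn / ((1 - AF Pd') * P * γn + 1) := hball hdist
  -- properties of Pd'
  have hAF'def : AF Pd' = δ * (γSI * Pd' + γm * P + 1) / (γm * P * (δ + 1)) := hAFd Pd'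
  have hAF'lt : AF Pd' < AF Pd := by
    rw [hAF'def, hAFdef]
    apply (div_lt_div_iff_of_pos_right hMP).mpr
    linarith only [mul_lt_mul_of_pos_left (mul_lt_mul_of_pos_left hPd'lt hγSI) hδpos]
  have hAF'pos : 0 < AF Pd' := by
    rw [hAF'def]
    have h1 : 0 < γSI * Pd' + γm * P + 1 := by
      linarith only [mul_nonneg hγSI.le hPd'pos.le, mul_pos hγm hP]
    exact div_pos (mul_pos hδpos h1) hMP
  have hAF'lt1 : AF Pd' < 1 := lt_trans hAF'lt ha0lt1
  have hc' : 0 < Pd' * γSI + 1 := by linarith only [mul_pos hPd'pos hγSI]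
  have hD20' : 0 < (1 - AF Pd') * P * γn + 1 := by
    linarith only [mul_pos (mul_pos (sub_pos.mpr hAF'lt1) hP) hγn]
  have hw' : 0 < δ + 1 - Pd' * γd := by
    linarith only [hw, mul_pos (sub_pos.mpr hPd'lt) hγd]
  -- feasibility of (AF Pd', Pd')
  have hBF' : BF Pd' ≤ AF Pd' := by
    have hBF'def : BF Pd' = (P * γn + 1) * (δ - Pd' * γd) / (P * γn * (δ + 1 - Pd' * γd)) :=
      hBFd Pd'
    have htmp : δ - Pd' * γd < AF Pd' * P * γn / ((1 - AF Pd') * P * γn + 1) := by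
      linarith only [hWPd']
    have hphi : (δ - Pd' * γd) * ((1 - AF Pd') * P * γn + 1) < AF Pd' * P * γn :=
      (lt_div_iff₀ hD20').mp htmp
    rw [hBF'def, div_le_iff₀ (mul_pos hN hw')]
    linarith only [hphi]
  have hCF' : AF Pd' ≤ CF Pd' := by
    have hCF'def : CF Pd' = 1 - δ * (γSI * Pd' + 1) / (P * γm) := hCFd Pd'
    have hmono : δ * (γSI * Pd' + 1) / (P * γm) ≤ δ * (γSI * Pd + 1) / (P * γm) :=
      (div_le_div_iff_of_pos_right hM).mpr (by
        linarith only [mul_lt_mul_of_pos_left (mul_lt_mul_of_pos_left hPd'lt hγSI) hδpos])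
    rw [hCF'def]
    rw [hCFdef] at hCFle
    linarith only [hAF'lt, hlt, hCFle, hmono]
  have hq'S : ((AF Pd', Pd') : ℝ × ℝ) ∈ S :=
    (hSd _).mpr ⟨hPd'pos.le, le_trans hPd'lt.le hPdb, max_le le_rfl hBF', hCF'⟩
  -- value at (AF Pd', Pd') and contradiction
  have hgq' : g (AF Pd') Pd' = Real.logb 2 (1 + P * γm / (Pd' * γSI + 1)) := by
    rw [hgd]
    exact auxA P γm γn γd γSI Rth δ Pd' (AF Pd') hM hδpos hδR hc' hAF'lt1 hAF'def hWPd'.le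
  have hcontr : g (AF Pd') Pd' ≤ g α Pd := hmax (AF Pd', Pd') hq'S
  have hKK' : Real.logb 2 (1 + P * γm / (Pd * γSI + 1))
      < Real.logb 2 (1 + P * γm / (Pd' * γSI + 1)) := by
    apply Real.logb_lt_logb one_lt_two
    · have h1 : 0 ≤ P * γm / (Pd * γSI + 1) := div_nonneg hM.le hc.le
      linarith only [h1]
    · have htmp : Pd' * γSI + 1 < Pd * γSI + 1 := by
        linarith only [mul_lt_mul_of_pos_right hPd'lt hγSI]
      have h := div_lt_div_of_pos_left hM hc' htmp
      linarith only [h]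
  linarith only [hKb, hcontr, hgq', hKK']
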